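/- Let (Ω, ℱ, P) be a probability space, X : Ω → ℝ^k a random vector, D* : Ω → {0,1} binary with P(D*=1) > 0, and Y₀(0), Y₁(0), Y₁(1) integrable real random variables. Define Y₀ := Y₀(0), Y₁ := D*·Y₁(1) + (1−D*)·Y₁(0), G₁(0) := Y₁(0) − Y₀(0), and X̊ := X − E[X | D*=1]. Suppose: (i) conditional parallel trends, E[G₁(0) | σ(X, D*)] = E[G₁(0) | σ(X)] a.s.; (ii) E[G₁(0) | σ(X)] = δ₀₁ + ⟪X̊, δ₁₁⟫ a.s. for constants δ₀₁ ∈ ℝ, δ₁₁ ∈ ℝ^k; and (iii) D*·E[Y₁(1)−Y₁(0) | σ(X, D*)] = D*·(τ + ⟪X̊, κ⟫) a.s. for constants τ ∈ ℝ, κ ∈ ℝ^k. Then almost surely E[Y₁−Y₀ | σ(X, D*)] = δ₀₁ + ⟪X̊, δ₁₁⟫ + D*·(τ + ⟪X̊, κ⟫); in particular, the error Δξ := (Y₁−Y₀) − δ₀₁ − ⟪X̊, δ₁₁⟫ − D*·(τ + ⟪X̊, κ⟫) satisfies E[Δξ | σ(X, D*)] = 0 almost surely and E[Δξ] = 0.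 -/

import Mathlib

open MeasureTheory ProbabilityTheory
open scoped Matrix

/-- **Derivation of the first-differenced regression equation (equation (19) of the paper).**
Under conditional parallel trends and the linear specifications of the covariate-specific trend
and the heterogeneous treatment effect, the observed outcome change has conditional mean
`δ₀₁ + ⟪X̊, δ₁₁⟫ + D*·(τ + ⟪X̊, κ⟫)` given `σ(X, D*)`, so the implied error `Δξ` satisfies
`E[Δξ | σ(X, D*)] = 0` a.s. and `E[Δξ] = 0`. -/
theorem fd_regression_equation_derivation
    {Ω : Type*} [MeasureSpace Ω] [IsProbabilityMeasure (ℙ : Measure Ω)]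
    {k : ℕ} (X : Ω → (Fin k → ℝ)) (Dstar : Ω → ℝ) (Y00 Y10 Y11 : Ω → ℝ)
    (hX : Measurable X) (hXint : Integrable X)
    (hDs : Measurable Dstar) (hDsbin : ∀ ω, Dstar ω = 0 ∨ Dstar ω = 1)
    (hDs1 : 0 < (ℙ : Measure Ω) {ω | Dstar ω = 1})
    (hY00 : Integrable Y00) (hY10 : Integrable Y10) (hY11 : Integrable Y11)
    -- X̊ = X − E[X | D* = 1]
    (Xc : Ω → (Fin k → ℝ))
    (hXc : ∀ ω j, Xc ω j = X ω j
      - (∫ ω', Dstar ω' * X ω' j) / ((ℙ : Measure Ω) {ω' | Dstar ω' = 1}).toReal)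
    (δ01 : ℝ) (δ11 : Fin k → ℝ) (τ : ℝ) (κ : Fin k → ℝ)
    -- (i) conditional parallel trends
    (hcpt : (ℙ : Measure Ω)[(fun ω => Y10 ω - Y00 ω) |
          MeasurableSpace.comap (fun ω => (X ω, Dstar ω)) inferInstance]
        =ᵐ[(ℙ : Measure Ω)]
      (ℙ : Measure Ω)[(fun ω => Y10 ω - Y00 ω) | MeasurableSpace.comap X inferInstance])
    -- (ii) linear covariate-specific trend
    (hlin : (ℙ : Measure Ω)[(fun ω => Y10 ω - Y00 ω) | MeasurableSpace.comap X inferInstance]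
        =ᵐ[(ℙ : Measure Ω)] fun ω => δ01 + Xc ω ⬝ᵥ δ11)
    -- (iii) linear heterogeneous treatment effect on the treated
    (hte : (fun ω => Dstar ω * ((ℙ : Measure Ω)[(fun ω' => Y11 ω' - Y10 ω') |
          MeasurableSpace.comap (fun ω' => (X ω', Dstar ω')) inferInstance]) ω)
        =ᵐ[(ℙ : Measure Ω)] fun ω => Dstar ω * (τ + Xc ω ⬝ᵥ κ)) :
    ((ℙ : Measure Ω)[(fun ω => (Dstar ω * Y11 ω + (1 - Dstar ω) * Y10 ω) - Y00 ω) |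
          MeasurableSpace.comap (fun ω => (X ω, Dstar ω)) inferInstance]
        =ᵐ[(ℙ : Measure Ω)]
      fun ω => δ01 + Xc ω ⬝ᵥ δ11 + Dstar ω * (τ + Xc ω ⬝ᵥ κ))
    ∧ ((ℙ : Measure Ω)[(fun ω => ((Dstar ω * Y11 ω + (1 - Dstar ω) * Y10 ω) - Y00 ω)
          - (δ01 + Xc ω ⬝ᵥ δ11 + Dstar ω * (τ + Xc ω ⬝ᵥ κ))) |
          MeasurableSpace.comap (fun ω => (X ω, Dstar ω)) inferInstance]
        =ᵐ[(ℙ : Measure Ω)] fun _ => (0 : ℝ))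
    ∧ (∫ ω, (((Dstar ω * Y11 ω + (1 - Dstar ω) * Y10 ω) - Y00 ω)
          - (δ01 + Xc ω ⬝ᵥ δ11 + Dstar ω * (τ + Xc ω ⬝ᵥ κ)))) = 0 := by
  classical
  set m : MeasurableSpace Ω := MeasurableSpace.comap (fun ω => (X ω, Dstar ω)) inferInstance
    with hmdef
  have hm : m ≤ MeasureSpace.toMeasurableSpace := by
    rw [hmdef]; exact (hX.prodMk hDs).comap_le
  haveI : SigmaFinite (Measure.trim ℙ hm) := by
    have : IsFiniteMeasure (Measure.trim ℙ hm) := isFiniteMeasure_trim hm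
    infer_instance
  -- measurability w.r.t. m
  have hDsm : Measurable[m] Dstar :=
    measurable_snd.comp (comap_measurable (fun ω => (X ω, Dstar ω)))
  have hXm : Measurable[m] X :=
    measurable_fst.comp (comap_measurable (fun ω => (X ω, Dstar ω)))
  have hXcm : ∀ j, Measurable[m] fun ω => Xc ω j := by
    intro j
    have : (fun ω => Xc ω j)
        = fun ω => X ω j
          - (∫ ω', Dstar ω' * X ω' j) / (ℙ {ω' | Dstar ω' = 1}).toReal :=
      funext fun ω => hXc ω j
    rw [this]
    exact ((measurable_pi_apply j).comp hXm).sub measurable_const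
  have hdotm : ∀ v : Fin k → ℝ, Measurable[m] fun ω => Xc ω ⬝ᵥ v := by
    intro v
    simp only [dotProduct]
    exact Finset.measurable_sum _ fun j _ => (hXcm j).mul_const _
  -- integrability
  have hXj : ∀ j, Integrable (fun ω => X ω j) ℙ := by
    intro j
    refine hXint.norm.mono ((measurable_pi_apply j).comp hX).aestronglyMeasurable
      (Filter.Eventually.of_forall fun ω => ?_)
    simpa using norm_le_pi_norm (X ω) j
  have hXcj : ∀ j, Integrable (fun ω => Xc ω j) ℙ := by
    intro j
    have : (fun ω => Xc ω j)
        = fun ω => X ω j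
          - (∫ ω', Dstar ω' * X ω' j) / (ℙ {ω' | Dstar ω' = 1}).toReal :=
      funext fun ω => hXc ω j
    rw [this]
    exact (hXj j).sub (integrable_const _)
  have hdoti : ∀ v : Fin k → ℝ, Integrable (fun ω => Xc ω ⬝ᵥ v) ℙ := by
    intro v
    simp only [dotProduct]
    exact integrable_finset_sum _ fun j _ => (hXcj j).mul_const _
  have hDabs : ∀ ω, ‖Dstar ω‖ ≤ 1 := by
    intro ω; rcases hDsbin ω with h | h <;> simp [h]
  -- main pieces
  set G : Ω → ℝ := fun ω => Y10 ω - Y00 ω with hGdef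
  set T : Ω → ℝ := fun ω => Y11 ω - Y10 ω with hTdef
  have hG : Integrable G ℙ := hY10.sub hY00
  have hT : Integrable T ℙ := hY11.sub hY10
  have hDT : Integrable (Dstar * T) ℙ := hT.bdd_mul hDs.aestronglyMeasurable (Filter.Eventually.of_forall hDabs)
  have hΔ : (fun ω => (Dstar ω * Y11 ω + (1 - Dstar ω) * Y10 ω) - Y00 ω) = G + Dstar * T := by
    funext ω; simp only [hGdef, hTdef, Pi.add_apply, Pi.mul_apply]; ring
  set h : Ω → ℝ := fun ω => δ01 + Xc ω ⬝ᵥ δ11 + Dstar ω * (τ + Xc ω ⬝ᵥ κ) with hhdef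
  have hhm : Measurable[m] h := by
    exact ((measurable_const.add (hdotm δ11)).add
      (hDsm.mul (measurable_const.add (hdotm κ))))
  have hhint : Integrable h ℙ := by
    refine ((integrable_const δ01).add (hdoti δ11)).add ?_
    exact ((integrable_const τ).add (hdoti κ)).bdd_mul hDs.aestronglyMeasurable (Filter.Eventually.of_forall hDabs)
  have hΔint : Integrable (fun ω => (Dstar ω * Y11 ω + (1 - Dstar ω) * Y10 ω) - Y00 ω) ℙ := by
    rw [hΔ]; exact hG.add hDT
  -- part 1
  have key : ℙ[(fun ω => (Dstar ω * Y11 ω + (1 - Dstar ω) * Y10 ω) - Y00 ω) | m]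
      =ᵐ[ℙ] h := by
    calc ℙ[(fun ω => (Dstar ω * Y11 ω + (1 - Dstar ω) * Y10 ω) - Y00 ω) | m]
        = ℙ[G + Dstar * T | m] := by rw [hΔ]
      _ =ᵐ[ℙ] ℙ[G | m] + ℙ[Dstar * T | m] :=
          condExp_add hG hDT _
      _ =ᵐ[ℙ] h := by
          have h2 : ℙ[Dstar * T | m]
              =ᵐ[ℙ] fun ω => Dstar ω * (ℙ[T | m]) ω :=
            condExp_mul_of_stronglyMeasurable_left hDsm.stronglyMeasurable hDT hT
          have h3 : (fun ω => Dstar ω * (ℙ[T | m]) ω)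
              =ᵐ[ℙ] fun ω => Dstar ω * (τ + Xc ω ⬝ᵥ κ) := hte
          have h1 : ℙ[G | m]
              =ᵐ[ℙ] fun ω => δ01 + Xc ω ⬝ᵥ δ11 := hcpt.trans hlin
          filter_upwards [h1, h2.trans h3] with ω hω1 hω2
          simp only [Pi.add_apply, hω1, hω2, hhdef]
  refine ⟨key, ?_, ?_⟩
  · -- part 2
    have hsub : ℙ[(fun ω => ((Dstar ω * Y11 ω + (1 - Dstar ω) * Y10 ω) - Y00 ω)
          - (δ01 + Xc ω ⬝ᵥ δ11 + Dstar ω * (τ + Xc ω ⬝ᵥ κ))) | m]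
        =ᵐ[ℙ]
          ℙ[(fun ω => (Dstar ω * Y11 ω + (1 - Dstar ω) * Y10 ω) - Y00 ω) | m]
          - ℙ[h | m] :=
      condExp_sub hΔint hhint _
    have hch : ℙ[h | m] = h :=
      condExp_of_stronglyMeasurable hm hhm.stronglyMeasurable hhint
    rw [hch] at hsub
    refine hsub.trans ?_
    filter_upwards [key] with ω hω
    simp [hω]
  · -- part 3
    have hξint : Integrable (fun ω => ((Dstar ω * Y11 ω + (1 - Dstar ω) * Y10 ω) - Y00 ω)
        - (δ01 + Xc ω ⬝ᵥ δ11 + Dstar ω * (τ + Xc ω ⬝ᵥ κ))) ℙ := hΔint.sub hhint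
    have hsub : ℙ[(fun ω => ((Dstar ω * Y11 ω + (1 - Dstar ω) * Y10 ω) - Y00 ω)
          - (δ01 + Xc ω ⬝ᵥ δ11 + Dstar ω * (τ + Xc ω ⬝ᵥ κ))) | m]
        =ᵐ[ℙ]
          ℙ[(fun ω => (Dstar ω * Y11 ω + (1 - Dstar ω) * Y10 ω) - Y00 ω) | m]
          - ℙ[h | m] :=
      condExp_sub hΔint hhint _
    have hch : ℙ[h | m] = h :=
      condExp_of_stronglyMeasurable hm hhm.stronglyMeasurable hhint
    rw [hch] at hsub
    have hzero : ℙ[(fun ω => ((Dstar ω * Y11 ω + (1 - Dstar ω) * Y10 ω) - Y00 ω)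
          - (δ01 + Xc ω ⬝ᵥ δ11 + Dstar ω * (τ + Xc ω ⬝ᵥ κ))) | m]
        =ᵐ[ℙ] fun _ => (0 : ℝ) := by
      refine hsub.trans ?_
      filter_upwards [key] with ω hω
      simp [hω]
    calc (∫ ω, (((Dstar ω * Y11 ω + (1 - Dstar ω) * Y10 ω) - Y00 ω)
          - (δ01 + Xc ω ⬝ᵥ δ11 + Dstar ω * (τ + Xc ω ⬝ᵥ κ))))
        = ∫ ω, (ℙ[(fun ω => ((Dstar ω * Y11 ω + (1 - Dstar ω) * Y10 ω) - Y00 ω)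
            - (δ01 + Xc ω ⬝ᵥ δ11 + Dstar ω * (τ + Xc ω ⬝ᵥ κ))) | m]) ω :=
          (integral_condExp hm).symm
      _ = ∫ _ω, (0 : ℝ) := integral_congr_ae hzero
      _ = 0 := integral_zero _ _
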